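/- If a join-semilattice S with a least element 0 admits a basis B (a subset such that each element of S is the join of a unique finite subset of B, and 0 is the join of the empty set), then every element of B is a nonzero coprime element of S. -/
import Mathlib


/-- `B` is a basis of a join-semilattice with bottom: every element is the join of a
unique finite subset of `B`. -/
def IsSemilatticeBasis {S : Type*} [SemilatticeSup S] [OrderBot S] (B : Set S) : Prop :=
  ∀ x : S, ∃! F : Finset S, ↑F ⊆ B ∧ x = F.sup id

/-- Every element of a basis is a nonzero coprime element. -/
theorem basis_mem_coprime {S : Type*} [SemilatticeSup S] [OrderBot S]
    (B : Set S) (hB : IsSemilatticeBasis B) :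
    ∀ b ∈ B, b ≠ ⊥ ∧
      ∀ (F : Finset S) (hF : F.Nonempty), b ≤ F.sup' hF id → ∃ f ∈ F, b ≤ f := by
  intro b hb
  constructor
  · intro hbot
    obtain ⟨F, hF, huniq⟩ := hB ⊥
    have h1 : ({b} : Finset S) = F := huniq {b} ⟨by simpa using hb, by simp [← hbot]⟩
    have h2 : (∅ : Finset S) = F := huniq ∅ ⟨by simp, by simp⟩
    rw [← h2] at h1
    exact Finset.singleton_ne_empty b h1
  · intro F hFne hle
    classical
    set rep : S → Finset S := fun f => (hB f).choose with hrep
    have hrepB : ∀ f, ↑(rep f) ⊆ B := fun f => (hB f).choose_spec.1.1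
    have hrepsup : ∀ f, f = (rep f).sup id := fun f => (hB f).choose_spec.1.2
    set G : Finset S := F.biUnion rep with hG
    have hGB : ↑G ⊆ B := by
      intro x hx
      simp only [hG, Finset.coe_biUnion, Set.mem_iUnion, Finset.mem_coe] at hx
      obtain ⟨f, _, hx⟩ := hx
      exact hrepB f hx
    have hGsup : G.sup id = F.sup id := by
      rw [hG, Finset.sup_biUnion]
      exact Finset.sup_congr rfl (fun f _ => (hrepsup f).symm)
    obtain ⟨H, hH, huniq⟩ := hB (F.sup id)
    have h1 : G = H := huniq G ⟨hGB, hGsup.symm⟩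
    have hble : b ≤ F.sup id := by rwa [← Finset.sup'_eq_sup hFne]
    have h2 : insert b G = H := by
      refine huniq (insert b G) ⟨?_, ?_⟩
      · intro x hx
        simp only [Finset.coe_insert, Set.mem_insert_iff, Finset.mem_coe] at hx
        rcases hx with rfl | hx
        · exact hb
        · exact hGB hx
      · rw [Finset.sup_insert, hGsup]
        simp [sup_eq_right.mpr hble]
    have hbG : b ∈ G := by
      rw [← h1] at h2
      have hmem : b ∈ insert b G := Finset.mem_insert_self b G
      rwa [h2] at hmem
    rw [hG, Finset.mem_biUnion] at hbG
    obtain ⟨f, hf, hbf⟩ := hbG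
    refine ⟨f, hf, ?_⟩
    calc b = id b := rfl
    _ ≤ (rep f).sup id := Finset.le_sup hbf
    _ = f := (hrepsup f).symm
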